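/- Let 0 < p < ∞, let A_1, …, A_K be Hermitian n×n complex matrices, and set C := Σ_{k=1}^K |A_k ⊗ₖ 1 − 1 ⊗ₖ A_kᵀ|^p. Then for every ε > 0 there exists p₀ such that for every p' ≥ p₀ there exist finitely many Hermitian n×n complex matrices B_1, …, B_J with ‖C − Σ_{j=1}^J |B_j ⊗ₖ 1 − 1 ⊗ₖ B_jᵀ|^{p'}‖ ≤ ε, where ‖·‖ is the ℓ²→ℓ² operator norm on matrices. (Every p-cost operator lies in C_∞(H): C_p(H) ⊆ C_∞(H).) -/

import Mathlib

open Kronecker Matrix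
open scoped ComplexOrder

/-- `costOp p A` is the cost operator `|A ⊗ₖ 1 - 1 ⊗ₖ Aᵀ|^p`, where `|·|^p` is the
functional calculus applied with `x ↦ |x| ^ p` (real rpow). -/
noncomputable def costOp {n : ℕ} (p : ℝ) (A : Matrix (Fin n) (Fin n) ℂ) :
    Matrix (Fin n × Fin n) (Fin n × Fin n) ℂ :=
  cfc (fun x : ℝ => |x| ^ p)
    (A ⊗ₖ (1 : Matrix (Fin n) (Fin n) ℂ) - (1 : Matrix (Fin n) (Fin n) ℂ) ⊗ₖ Aᵀ)

open scoped Matrix.Norms.L2Operator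

section NumericCore

open Finset

variable {n : ℕ}

/-- multiplicity of the value `d i` -/
noncomputable def pci.mult (d : Fin n → ℝ) (i : Fin n) : ℝ :=
  ((Finset.univ.filter fun x => d x = d i).card : ℝ)

noncomputable def pci.cc (d : Fin n → ℝ) (p q : ℝ) (i j : Fin n) : ℝ :=
  (|d i - d j| ^ p / (2 * pci.mult d i * pci.mult d j)) ^ q⁻¹

noncomputable def pci.wfun (d : Fin n → ℝ) (i j a : Fin n) : ℝ :=
  if d a = d i then 0 else if d a = d j then 1 else 2⁻¹

noncomputable def pci.gfun (d : Fin n → ℝ) (p q : ℝ) (i j a : Fin n) : ℝ :=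
  pci.cc d p q i j * pci.wfun d i j a

namespace pci

lemma mult_pos (d : Fin n → ℝ) (i : Fin n) : 1 ≤ mult d i := by
  unfold mult
  have : i ∈ Finset.univ.filter fun x => d x = d i := by simp
  have h1 : 1 ≤ (Finset.univ.filter fun x => d x = d i).card :=
    Finset.card_pos.mpr ⟨i, this⟩
  exact_mod_cast h1

lemma mult_eq_of_eq {d : Fin n → ℝ} {i j : Fin n} (h : d i = d j) : mult d i = mult d j := by
  unfold mult
  congr 1
  apply Finset.card_bij (fun x _ => x) <;> simp [h]

lemma cc_nonneg (d : Fin n → ℝ) (p q : ℝ) (i j : Fin n) : 0 ≤ cc d p q i j := by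
  unfold cc
  have h1 := mult_pos d i
  have h2 := mult_pos d j
  positivity

lemma cc_pow (d : Fin n → ℝ) (p : ℝ) {q : ℝ} (hq : q ≠ 0) (i j : Fin n) :
    cc d p q i j ^ q = |d i - d j| ^ p / (2 * mult d i * mult d j) := by
  unfold cc
  refine Real.rpow_inv_rpow ?_ hq
  have h1 := mult_pos d i
  have h2 := mult_pos d j
  positivity

lemma cc_pow_le (d : Fin n → ℝ) (p : ℝ) {q : ℝ} (hq : q ≠ 0) (i j : Fin n) :
    cc d p q i j ^ q ≤ |d i - d j| ^ p := by
  rw [cc_pow d p hq i j]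
  have h1 := mult_pos d i
  have h2 := mult_pos d j
  apply div_le_self (by positivity)
  nlinarith

/-- exact condition -/
def econd (d : Fin n → ℝ) (a b i j : Fin n) : Prop :=
  (d i = d a ∧ d j = d b ∨ d i = d b ∧ d j = d a) ∧ d a ≠ d b

lemma wfun_of_econd {d : Fin n → ℝ} {a b i j : Fin n} (h : econd d a b i j) :
    |wfun d i j a - wfun d i j b| = 1 := by
  obtain ⟨h1 | h1, hab⟩ := h
  · have ha : wfun d i j a = 0 := by unfold wfun; rw [if_pos (h1.1.symm)]
    have hb : wfun d i j b = 1 := by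
      unfold wfun
      rw [if_neg (by rw [h1.1]; exact fun hc => hab hc.symm), if_pos h1.2.symm]
    rw [ha, hb]; norm_num
  · have hb : wfun d i j b = 0 := by unfold wfun; rw [if_pos (h1.1.symm)]
    have ha : wfun d i j a = 1 := by
      unfold wfun
      rw [if_neg (by rw [h1.1]; exact hab), if_pos h1.2.symm]
    rw [ha, hb]; norm_num

lemma wfun_of_not_econd {d : Fin n → ℝ} {a b i j : Fin n} (h : ¬ econd d a b i j) :
    |wfun d i j a - wfun d i j b| ≤ 2⁻¹ := by
  unfold econd at h
  push_neg at h
  by_cases h1 : d a = d i <;> by_cases h2 : d b = d i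
  · norm_num [wfun, h1, h2, abs_le]
  · by_cases h4 : d b = d j
    · exact absurd (h (Or.inl ⟨h1.symm, h4.symm⟩)) (by rw [h1]; exact fun hc => h2 hc.symm)
    · norm_num [wfun, h1, h2, h4, abs_le]
  · by_cases h3 : d a = d j
    · exact absurd (h (Or.inr ⟨h2.symm, h3.symm⟩)) (fun hc => h1 (hc.trans h2))
    · norm_num [wfun, h1, h2, h3, abs_le]
  · by_cases h3 : d a = d j <;> by_cases h4 : d b = d j <;>
      norm_num [wfun, h1, h2, h3, h4, abs_le] <;> split_ifs <;> norm_num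

open scoped Classical in
lemma numeric_core (d : Fin n → ℝ) (p q : ℝ) (hp : 0 < p) (hq : 1 ≤ q) (a b : Fin n) :
    |(|d a - d b| ^ p) - ∑ x : Fin n × Fin n,
        |gfun d p q x.1 x.2 a - gfun d p q x.1 x.2 b| ^ q|
      ≤ (∑ x : Fin n × Fin n, |d x.1 - d x.2| ^ p) * (2:ℝ)⁻¹ ^ q := by
  have hq0 : (0:ℝ) < q := lt_of_lt_of_le one_pos hq
  have hqne : q ≠ 0 := hq0.ne'
  set F : Fin n × Fin n → ℝ :=
    fun x => |gfun d p q x.1 x.2 a - gfun d p q x.1 x.2 b| ^ q with hFdef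
  set G : Fin n × Fin n → ℝ :=
    fun x => if econd d a b x.1 x.2 then cc d p q x.1 x.2 ^ q else 0 with hGdef
  have hF : ∀ x : Fin n × Fin n,
      F x = cc d p q x.1 x.2 ^ q * |wfun d x.1 x.2 a - wfun d x.1 x.2 b| ^ q := by
    intro x
    rw [hFdef]
    simp only [gfun]
    rw [← mul_sub, abs_mul, abs_of_nonneg (cc_nonneg d p q x.1 x.2),
      Real.mul_rpow (cc_nonneg d p q x.1 x.2) (abs_nonneg _)]
  have hFG : ∀ x : Fin n × Fin n,
      |F x - G x| ≤ |d x.1 - d x.2| ^ p * (2:ℝ)⁻¹ ^ q := by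
    intro x
    by_cases hc : econd d a b x.1 x.2
    · have : F x = G x := by
        rw [hF x, hGdef]
        simp only [hc, if_true]
        rw [wfun_of_econd hc, Real.one_rpow, mul_one]
      rw [this, sub_self, abs_zero]
      exact mul_nonneg (Real.rpow_nonneg (abs_nonneg _) p)
        (Real.rpow_nonneg (by norm_num) q)
    · have hG0 : G x = 0 := by rw [hGdef]; simp [hc]
      rw [hG0, sub_zero, hF x, abs_of_nonneg (mul_nonneg
        (Real.rpow_nonneg (cc_nonneg d p q x.1 x.2) q)
        (Real.rpow_nonneg (abs_nonneg _) q))]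
      have h1 : |wfun d x.1 x.2 a - wfun d x.1 x.2 b| ^ q ≤ (2:ℝ)⁻¹ ^ q :=
        Real.rpow_le_rpow (abs_nonneg _) (wfun_of_not_econd hc) hq0.le
      have h2 : cc d p q x.1 x.2 ^ q ≤ |d x.1 - d x.2| ^ p := cc_pow_le d p hqne x.1 x.2
      have h4 : (0:ℝ) ≤ |wfun d x.1 x.2 a - wfun d x.1 x.2 b| ^ q :=
        Real.rpow_nonneg (abs_nonneg _) q
      exact mul_le_mul h2 h1 h4 (Real.rpow_nonneg (abs_nonneg _) p)
  have hG : ∑ x : Fin n × Fin n, G x = |d a - d b| ^ p := by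
    by_cases hab : d a = d b
    · have h0 : ∀ x : Fin n × Fin n, G x = 0 := by
        intro x
        rw [hGdef]
        show (if econd d a b x.1 x.2 then cc d p q x.1 x.2 ^ q else 0) = 0
        rw [if_neg (fun hc : econd d a b x.1 x.2 => hc.2 hab)]
      rw [Finset.sum_congr rfl (fun x _ => h0 x), Finset.sum_const, smul_zero, hab]
      rw [sub_self, abs_zero, Real.zero_rpow hp.ne']
    · -- split G into two indicator sums
      set tab := |d a - d b| ^ p with htab
      set v1 := tab / (2 * mult d a * mult d b) with hv1
      set v2 := tab / (2 * mult d b * mult d a) with hv2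
      have hsplit : ∀ x : Fin n × Fin n, G x =
          (if d x.1 = d a ∧ d x.2 = d b then v1 else 0)
          + (if d x.1 = d b ∧ d x.2 = d a then v2 else 0) := by
        intro x
        show (if econd d a b x.1 x.2 then cc d p q x.1 x.2 ^ q else 0) = _
        by_cases hL : d x.1 = d a ∧ d x.2 = d b
        · have hR : ¬ (d x.1 = d b ∧ d x.2 = d a) :=
            fun hR => hab (hL.1.symm.trans hR.1)
          have he : econd d a b x.1 x.2 := ⟨Or.inl ⟨hL.1, hL.2⟩, hab⟩
          rw [if_pos he, if_pos hL, if_neg hR, add_zero, cc_pow d p hqne,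
            mult_eq_of_eq hL.1, mult_eq_of_eq hL.2, hL.1, hL.2]
        · by_cases hR : d x.1 = d b ∧ d x.2 = d a
          · have he : econd d a b x.1 x.2 := ⟨Or.inr ⟨hR.1, hR.2⟩, hab⟩
            rw [if_pos he, if_neg hL, if_pos hR, zero_add, cc_pow d p hqne,
              mult_eq_of_eq hR.1, mult_eq_of_eq hR.2, hR.1, hR.2,
              abs_sub_comm (d b) (d a)]
          · have he : ¬ econd d a b x.1 x.2 := by
              intro he
              rcases he.1 with h | h
              · exact hL ⟨h.1, h.2⟩
              · exact hR ⟨h.1, h.2⟩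
            rw [if_neg he, if_neg hL, if_neg hR, add_zero]
      have hcount : ∀ (P Q : Fin n → Prop) (v : ℝ),
          (∑ x : Fin n × Fin n, if P x.1 ∧ Q x.2 then v else 0)
            = ((Finset.univ.filter P).card : ℝ) * ((Finset.univ.filter Q).card : ℝ) * v := by
        intro P Q v
        have hpt : ∀ (i j : Fin n), (if P i ∧ Q j then v else 0)
            = (if P i then (1:ℝ) else 0) * (if Q j then (1:ℝ) else 0) * v := by
          intro i j
          by_cases hP : P i <;> by_cases hQ : Q j <;> simp [hP, hQ]
        rw [Fintype.sum_prod_type]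
        simp_rw [hpt]
        simp_rw [← Finset.sum_mul]
        rw [← Finset.sum_mul_sum (Finset.univ) (Finset.univ)
          (fun i => if P i then (1:ℝ) else 0) (fun j => if Q j then (1:ℝ) else 0)]
        rw [Finset.sum_boole, Finset.sum_boole]
      have e1 := hcount (fun i => d i = d a) (fun j => d j = d b) v1
      have e2 := hcount (fun i => d i = d b) (fun j => d j = d a) v2
      rw [Finset.sum_congr rfl (fun x _ => hsplit x), Finset.sum_add_distrib, e1, e2]
      have ha := mult_pos d a
      have hb := mult_pos d b
      have hma : ((Finset.univ.filter fun i => d i = d a).card : ℝ) = mult d a := rfl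
      have hmb : ((Finset.univ.filter fun i => d i = d b).card : ℝ) = mult d b := rfl
      rw [hma, hmb, hv1, hv2, htab]
      field_simp
      ring
  calc |(|d a - d b| ^ p) - ∑ x : Fin n × Fin n, F x|
      = |∑ x : Fin n × Fin n, (G x - F x)| := by rw [Finset.sum_sub_distrib, hG]
    _ ≤ ∑ x : Fin n × Fin n, |G x - F x| := Finset.abs_sum_le_sum_abs _ _
    _ ≤ ∑ x : Fin n × Fin n, |d x.1 - d x.2| ^ p * (2:ℝ)⁻¹ ^ q :=
        Finset.sum_le_sum (fun x _ => (abs_sub_comm (G x) (F x)) ▸ hFG x)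
    _ = (∑ x : Fin n × Fin n, |d x.1 - d x.2| ^ p) * (2:ℝ)⁻¹ ^ q :=
        (Finset.sum_mul _ _ _).symm

end pci

end NumericCore

section MatrixHelpers

open Polynomial

variable {m : Type*} [Fintype m] [DecidableEq m]

lemma pci.kron_conjTranspose {l : Type*}
    (A : Matrix m m ℂ) (B : Matrix l l ℂ) : (A ⊗ₖ B)ᴴ = Aᴴ ⊗ₖ Bᴴ := by
  ext ⟨i, j⟩ ⟨k, s⟩
  simp [Matrix.conjTranspose_apply, Matrix.kroneckerMap_apply, mul_comm]

lemma pci.diag_norm_le (v : m → ℂ) {B : ℝ} (hB : 0 ≤ B) (h : ∀ i, ‖v i‖ ≤ B) :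
    ‖(Matrix.diagonal v : Matrix m m ℂ)‖ ≤ B := by
  rw [Matrix.l2_opNorm_def]
  refine ContinuousLinearMap.opNorm_le_bound _ hB fun x => ?_
  have happ : ∀ i, ((Matrix.toEuclideanLin.trans LinearMap.toContinuousLinearMap)
      (Matrix.diagonal v) x) i = v i * x i := by
    intro i
    show (Matrix.diagonal v *ᵥ _) i = _
    rw [Matrix.mulVec_diagonal]
    rfl
  rw [EuclideanSpace.norm_eq, EuclideanSpace.norm_eq]
  calc √(∑ i, ‖((Matrix.toEuclideanLin.trans LinearMap.toContinuousLinearMap)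
        (Matrix.diagonal v) x) i‖ ^ 2)
      ≤ √(∑ i, (B * ‖x i‖) ^ 2) := by
        apply Real.sqrt_le_sqrt
        apply Finset.sum_le_sum
        intro i _
        rw [happ i, norm_mul]
        have h1 : ‖v i‖ * ‖x i‖ ≤ B * ‖x i‖ :=
          mul_le_mul_of_nonneg_right (h i) (norm_nonneg _)
        exact pow_le_pow_left₀ (by positivity) h1 2
    _ = B * √(∑ i, ‖x i‖ ^ 2) := by
        have : ∑ i, (B * ‖x i‖) ^ 2 = B ^ 2 * ∑ i, ‖x i‖ ^ 2 := by
          simp [mul_pow, Finset.mul_sum]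
        rw [this, Real.sqrt_mul (sq_nonneg B), Real.sqrt_sq hB]

lemma pci.unitary_norm_le {W : Matrix m m ℂ} (hW : W ∈ Matrix.unitaryGroup m ℂ) :
    ‖W‖ ≤ 1 := by
  have h1 : Wᴴ * W = 1 := by
    rw [← Matrix.star_eq_conjTranspose]
    exact (Matrix.mem_unitaryGroup_iff'.mp hW)
  have h2 : ‖W‖ * ‖W‖ = ‖(1 : Matrix m m ℂ)‖ := by
    rw [← Matrix.l2_opNorm_conjTranspose_mul_self, h1]
  have h3 : ‖(1 : Matrix m m ℂ)‖ ≤ 1 := by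
    rw [← Matrix.diagonal_one]
    exact pci.diag_norm_le _ zero_le_one (fun i => by simp)
  nlinarith [norm_nonneg W]

lemma pci.conj_norm_le {W : Matrix m m ℂ} (hW : W ∈ Matrix.unitaryGroup m ℂ)
    (X : Matrix m m ℂ) : ‖W * X * Wᴴ‖ ≤ ‖X‖ := by
  have h1 : ‖W * X * Wᴴ‖ ≤ ‖W‖ * ‖X‖ * ‖Wᴴ‖ :=
    le_trans (Matrix.l2_opNorm_mul _ _)
      (by gcongr; exact Matrix.l2_opNorm_mul _ _)
  have h2 : ‖Wᴴ‖ = ‖W‖ := Matrix.l2_opNorm_conjTranspose W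
  have h3 := pci.unitary_norm_le hW
  have h4 := norm_nonneg X
  have h5 := norm_nonneg W
  calc ‖W * X * Wᴴ‖ ≤ ‖W‖ * ‖X‖ * ‖Wᴴ‖ := h1
    _ = ‖W‖ * ‖W‖ * ‖X‖ := by rw [h2]; ring
    _ ≤ 1 * 1 * ‖X‖ := by gcongr
    _ = ‖X‖ := by ring

/-- Conjugation by a unitary as an `ℝ`-algebra homomorphism. -/
noncomputable def pci.conjAlgHom {W : Matrix m m ℂ} (hW : W ∈ Matrix.unitaryGroup m ℂ) :
    Matrix m m ℂ →ₐ[ℝ] Matrix m m ℂ where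
  toFun X := W * X * Wᴴ
  map_one' := by
    show W * 1 * Wᴴ = 1
    rw [mul_one, ← Matrix.star_eq_conjTranspose]
    exact Matrix.mem_unitaryGroup_iff.mp hW
  map_mul' X Y := by
    show W * (X * Y) * Wᴴ = (W * X * Wᴴ) * (W * Y * Wᴴ)
    have h1 : Wᴴ * W = 1 := by
      rw [← Matrix.star_eq_conjTranspose]
      exact Matrix.mem_unitaryGroup_iff'.mp hW
    calc W * (X * Y) * Wᴴ = W * X * (Wᴴ * W) * Y * Wᴴ := by rw [h1, mul_one]; noncomm_ring
      _ = W * X * Wᴴ * (W * Y * Wᴴ) := by noncomm_ring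
  map_zero' := by show W * 0 * Wᴴ = 0; simp
  map_add' X Y := by show _ = _; noncomm_ring
  commutes' r := by
    show W * algebraMap ℝ (Matrix m m ℂ) r * Wᴴ = _
    have h1 : W * Wᴴ = 1 := by
      rw [← Matrix.star_eq_conjTranspose]
      exact Matrix.mem_unitaryGroup_iff.mp hW
    simp only [Algebra.algebraMap_eq_smul_one]
    rw [mul_smul_comm, mul_one, smul_mul_assoc, h1]

lemma pci.cfc_conj_diag {W : Matrix m m ℂ} (hW : W ∈ Matrix.unitaryGroup m ℂ)
    (e : m → ℝ) (f : ℝ → ℝ) :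
    cfc f (W * Matrix.diagonal (fun i => (e i : ℂ)) * Wᴴ)
      = W * Matrix.diagonal (fun i => (f (e i) : ℂ)) * Wᴴ := by
  set T := W * Matrix.diagonal (fun i => (e i : ℂ)) * Wᴴ with hT
  have hdh : (Matrix.diagonal (fun i => (e i : ℂ))).IsHermitian := by
    have hst : (star fun i => ((e i : ℂ))) = fun i => ((e i : ℂ)) :=
      funext fun i => Complex.conj_ofReal (e i)
    rw [Matrix.IsHermitian, Matrix.diagonal_conjTranspose, hst]
  have hTh : IsSelfAdjoint T := by
    exact Matrix.isHermitian_mul_mul_conjTranspose W hdh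
  -- spectrum
  have hspec : spectrum ℝ T ⊆ Set.range e := by
    intro r hr
    have h1 : (r : ℂ) ∈ spectrum ℂ T := spectrum.algebraMap_mem_iff ℂ |>.mpr hr
    have h2 : spectrum ℂ T = spectrum ℂ (Matrix.diagonal (fun i => (e i : ℂ))) := by
      rw [hT, ← Matrix.star_eq_conjTranspose]
      exact Unitary.spectrum_star_right_conjugate (U := ⟨W, hW⟩)
    rw [h2, spectrum_diagonal] at h1
    obtain ⟨i, hi⟩ := h1
    exact ⟨i, Complex.ofReal_inj.mp hi⟩
  -- interpolating polynomial
  set s : Finset ℝ := Finset.univ.image e with hs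
  set P : Polynomial ℝ := Lagrange.interpolate s id f with hP
  have hPe : ∀ x ∈ s, P.eval x = f x := fun x hx =>
    Lagrange.eval_interpolate_at_node f (Set.injOn_id _) hx
  have h1 : cfc f T = cfc P.eval T := by
    apply cfc_congr
    intro x hx
    exact (hPe x (by
      obtain ⟨i, rfl⟩ := hspec hx
      exact Finset.mem_image_of_mem e (Finset.mem_univ i))).symm
  rw [h1, cfc_polynomial P T hTh]
  have h2 : T = pci.conjAlgHom hW (Matrix.diagonal (fun i => (e i : ℂ))) := rfl
  rw [h2, Polynomial.aeval_algHom_apply]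
  have h3 : Polynomial.aeval (Matrix.diagonal (fun i => (e i : ℂ))) P
      = Matrix.diagonal (fun i => (f (e i) : ℂ)) := by
    have hd : Matrix.diagonal (fun i => (e i : ℂ))
        = Matrix.diagonalAlgHom (R := ℝ) (fun i => (e i : ℂ)) := rfl
    rw [hd, Polynomial.aeval_algHom_apply]
    have h4 : (Polynomial.aeval (fun i => (e i : ℂ))) P
        = fun i => (f (e i) : ℂ) := by
      funext i
      have h5 : Polynomial.aeval ((e i : ℂ)) P
          = (Polynomial.aeval (fun i => (e i : ℂ))) P i :=
        (Polynomial.aeval_algHom_apply (Pi.evalAlgHom ℝ (fun _ => ℂ) i)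
          (fun j => ((e j : ℂ))) P)
      rw [← h5]
      have h6 : ((e i : ℂ)) = algebraMap ℝ ℂ (e i) := rfl
      rw [h6, Polynomial.aeval_algebraMap_apply]
      have h7 : Polynomial.aeval (e i) P = P.eval (e i) := by
        simp [Polynomial.aeval_def, Polynomial.eval₂_eq_eval_map]
      rw [h7, hPe (e i) (Finset.mem_image_of_mem e (Finset.mem_univ i))]
      rfl
    rw [h4]
    rfl
  rw [h3]
  rfl

end MatrixHelpers

lemma pci.costOp_conj_diag {n : ℕ} {U : Matrix (Fin n) (Fin n) ℂ}
    (hU : U ∈ Matrix.unitaryGroup (Fin n) ℂ) (d : Fin n → ℝ) (q : ℝ) :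
    costOp q (U * Matrix.diagonal (fun i => (d i : ℂ)) * Uᴴ)
      = (U ⊗ₖ Uᴴᵀ) * Matrix.diagonal
          (fun x : Fin n × Fin n => ((|d x.1 - d x.2| ^ q : ℝ) : ℂ))
        * (U ⊗ₖ Uᴴᵀ)ᴴ := by
  set V := Uᴴᵀ with hVdef
  have hUU : U * Uᴴ = 1 := by
    rw [← Matrix.star_eq_conjTranspose]; exact Matrix.mem_unitaryGroup_iff.mp hU
  have hVH : Vᴴ = Uᵀ := by
    ext i j
    simp [hVdef, Matrix.conjTranspose_apply]
  have hVV : V * Vᴴ = 1 := by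
    rw [hVH, hVdef, ← Matrix.transpose_mul, hUU, Matrix.transpose_one]
  have hW : U ⊗ₖ V ∈ Matrix.unitaryGroup (Fin n × Fin n) ℂ := by
    rw [Matrix.mem_unitaryGroup_iff, Matrix.star_eq_conjTranspose,
      pci.kron_conjTranspose, ← Matrix.mul_kronecker_mul, hUU, hVV,
      Matrix.one_kronecker_one]
  set D := Matrix.diagonal (fun i => (d i : ℂ)) with hD
  have hDT : Dᵀ = D := Matrix.diagonal_transpose _
  have hkey : (U * D * Uᴴ) ⊗ₖ (1 : Matrix (Fin n) (Fin n) ℂ)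
      - (1 : Matrix (Fin n) (Fin n) ℂ) ⊗ₖ (U * D * Uᴴ)ᵀ
      = (U ⊗ₖ V) * Matrix.diagonal
          (fun x : Fin n × Fin n => ((d x.1 - d x.2 : ℝ) : ℂ)) * (U ⊗ₖ V)ᴴ := by
    have h1 : (U * D * Uᴴ) ⊗ₖ (1 : Matrix (Fin n) (Fin n) ℂ)
        = (U ⊗ₖ V) * (D ⊗ₖ (1 : Matrix (Fin n) (Fin n) ℂ)) * (U ⊗ₖ V)ᴴ := by
      rw [pci.kron_conjTranspose, ← Matrix.mul_kronecker_mul,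
        ← Matrix.mul_kronecker_mul]
      congr 1 <;> simp [mul_assoc, hVV, hUU]
    have h2 : (1 : Matrix (Fin n) (Fin n) ℂ) ⊗ₖ (U * D * Uᴴ)ᵀ
        = (U ⊗ₖ V) * ((1 : Matrix (Fin n) (Fin n) ℂ) ⊗ₖ D) * (U ⊗ₖ V)ᴴ := by
      have hBT : (U * D * Uᴴ)ᵀ = V * D * Vᴴ := by
        rw [Matrix.transpose_mul, Matrix.transpose_mul, hDT, hVH, hVdef]
        noncomm_ring
      rw [hBT, pci.kron_conjTranspose, ← Matrix.mul_kronecker_mul,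
        ← Matrix.mul_kronecker_mul]
      congr 1 <;> simp [mul_assoc, hVV, hUU]
    rw [h1, h2, ← sub_mul, ← mul_sub]
    congr 2
    rw [← Matrix.diagonal_one, Matrix.diagonal_kronecker_diagonal,
      Matrix.diagonal_kronecker_diagonal, Matrix.diagonal_sub]
    congr 1
    funext x
    push_cast
    ring
  rw [costOp, hkey]
  exact pci.cfc_conj_diag hW (fun x : Fin n × Fin n => d x.1 - d x.2) (fun x => |x| ^ q)

/-- Every `p`-cost operator lies in `C_∞(H)`: it is approximated in the `ℓ²→ℓ²` operator norm
by sums of `p'`-cost operators, for all sufficiently large `p'`. -/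
theorem p_cost_subset_infty_cost {n : ℕ} (p : ℝ) (hp : 0 < p) (K : ℕ)
    (A : Fin K → Matrix (Fin n) (Fin n) ℂ) (hA : ∀ k, (A k).IsHermitian) :
    ∀ ε : ℝ, 0 < ε → ∃ p₀ : ℝ, ∀ p' : ℝ, p₀ ≤ p' →
      ∃ (J : ℕ) (B : Fin J → Matrix (Fin n) (Fin n) ℂ),
        (∀ j, (B j).IsHermitian) ∧
        ‖(∑ k, costOp p (A k)) - ∑ j, costOp p' (B j)‖ ≤ ε := by
  intro ε hε
  -- eigen-data of the `A k`
  set d : Fin K → Fin n → ℝ := fun k => (hA k).eigenvalues with hd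
  set U : Fin K → Matrix (Fin n) (Fin n) ℂ :=
    fun k => ((hA k).eigenvectorUnitary : Matrix (Fin n) (Fin n) ℂ) with hU
  have hUmem : ∀ k, U k ∈ Matrix.unitaryGroup (Fin n) ℂ :=
    fun k => ((hA k).eigenvectorUnitary).2
  have hAeq : ∀ k, A k = U k * Matrix.diagonal (fun i => ((d k i : ℝ) : ℂ)) * (U k)ᴴ := by
    intro k
    exact (hA k).spectral_theorem
  set Tk : Fin K → ℝ := fun k => ∑ x : Fin n × Fin n, |d k x.1 - d k x.2| ^ p with hTk
  have hTk0 : ∀ k, 0 ≤ Tk k := by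
    intro k
    apply Finset.sum_nonneg
    intro x _
    exact Real.rpow_nonneg (abs_nonneg _) p
  set Ttot : ℝ := ∑ k, Tk k with hTtot
  have hTtot0 : 0 ≤ Ttot := Finset.sum_nonneg fun k _ => hTk0 k
  refine ⟨max 1 (Real.logb 2 ((Ttot + 1) / ε)), fun p' hp' => ?_⟩
  have hp'1 : 1 ≤ p' := le_trans (le_max_left _ _) hp'
  -- the approximating matrices
  set B' : Fin K × (Fin n × Fin n) → Matrix (Fin n) (Fin n) ℂ :=
    fun t => U t.1 * Matrix.diagonal
      (fun a => ((pci.gfun (d t.1) p p' t.2.1 t.2.2 a : ℝ) : ℂ)) * (U t.1)ᴴ with hB'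
  have hB'H : ∀ t, (B' t).IsHermitian := by
    intro t
    apply Matrix.isHermitian_mul_mul_conjTranspose
    have hst : (star fun a => ((pci.gfun (d t.1) p p' t.2.1 t.2.2 a : ℝ) : ℂ))
        = fun a => ((pci.gfun (d t.1) p p' t.2.1 t.2.2 a : ℝ) : ℂ) :=
      funext fun a => Complex.conj_ofReal _
    rw [Matrix.IsHermitian, Matrix.diagonal_conjTranspose, hst]
  -- index juggling
  set J : ℕ := Fintype.card (Fin K × (Fin n × Fin n)) with hJ
  set e : Fin J ≃ (Fin K × (Fin n × Fin n)) := (Fintype.equivFin _).symm with he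
  refine ⟨J, fun j => B' (e j), fun j => hB'H (e j), ?_⟩
  have hsum : (∑ j, costOp p' (B' (e j)))
      = ∑ k, ∑ x : Fin n × Fin n, costOp p' (B' (k, x)) := by
    rw [Equiv.sum_comp e (fun t => costOp p' (B' t))]
    exact Fintype.sum_prod_type _
  rw [hsum]
  -- per-`k` bound
  have hperk : ∀ k, ‖costOp p (A k) - ∑ x : Fin n × Fin n, costOp p' (B' (k, x))‖
      ≤ Tk k * (2:ℝ)⁻¹ ^ p' := by
    intro k
    set W := (U k) ⊗ₖ (U k)ᴴᵀ with hWdef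
    have hWmem : W ∈ Matrix.unitaryGroup (Fin n × Fin n) ℂ := by
      rw [hWdef, Matrix.mem_unitaryGroup_iff, Matrix.star_eq_conjTranspose,
        pci.kron_conjTranspose, ← Matrix.mul_kronecker_mul]
      have hUU : U k * (U k)ᴴ = 1 := by
        rw [← Matrix.star_eq_conjTranspose]
        exact Matrix.mem_unitaryGroup_iff.mp (hUmem k)
      have hVV : (U k)ᴴᵀ * ((U k)ᴴᵀ)ᴴ = 1 := by
        have hVH : ((U k)ᴴᵀ)ᴴ = (U k)ᵀ := by
          ext i j
          simp [Matrix.conjTranspose_apply]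
        rw [hVH, ← Matrix.transpose_mul, hUU, Matrix.transpose_one]
      rw [hUU, hVV, Matrix.one_kronecker_one]
    have hcost : costOp p (A k) = W * Matrix.diagonal
        (fun x : Fin n × Fin n => ((|d k x.1 - d k x.2| ^ p : ℝ) : ℂ)) * Wᴴ := by
      rw [hAeq k]
      exact pci.costOp_conj_diag (hUmem k) (d k) p
    have hcostB : ∀ x : Fin n × Fin n, costOp p' (B' (k, x))
        = W * Matrix.diagonal (fun y : Fin n × Fin n =>
            ((|pci.gfun (d k) p p' x.1 x.2 y.1 - pci.gfun (d k) p p' x.1 x.2 y.2| ^ p' : ℝ)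
              : ℂ)) * Wᴴ := by
      intro x
      exact pci.costOp_conj_diag (hUmem k) (fun a => pci.gfun (d k) p p' x.1 x.2 a) p'
    rw [hcost]
    rw [Finset.sum_congr rfl (fun x _ => hcostB x)]
    rw [← Finset.sum_mul, ← Finset.mul_sum]
    have hdsum : (∑ x : Fin n × Fin n, Matrix.diagonal (fun y : Fin n × Fin n =>
        ((|pci.gfun (d k) p p' x.1 x.2 y.1 - pci.gfun (d k) p p' x.1 x.2 y.2| ^ p' : ℝ)
          : ℂ)))
        = Matrix.diagonal (fun y : Fin n × Fin n => ∑ x : Fin n × Fin n,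
            ((|pci.gfun (d k) p p' x.1 x.2 y.1 - pci.gfun (d k) p p' x.1 x.2 y.2| ^ p' : ℝ)
              : ℂ)) := by
      ext i j
      by_cases hij : i = j
      · subst hij; simp [Matrix.sum_apply, Matrix.diagonal_apply]
      · simp [Matrix.sum_apply, Matrix.diagonal_apply, hij]
    rw [hdsum, ← sub_mul, ← mul_sub]
    have hdiff : (Matrix.diagonal (fun x : Fin n × Fin n =>
          ((|d k x.1 - d k x.2| ^ p : ℝ) : ℂ)))
        - Matrix.diagonal (fun y : Fin n × Fin n => ∑ x : Fin n × Fin n,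
            ((|pci.gfun (d k) p p' x.1 x.2 y.1 - pci.gfun (d k) p p' x.1 x.2 y.2| ^ p' : ℝ)
              : ℂ))
        = Matrix.diagonal (fun y : Fin n × Fin n =>
            ((|d k y.1 - d k y.2| ^ p : ℝ) : ℂ)
            - ∑ x : Fin n × Fin n,
              ((|pci.gfun (d k) p p' x.1 x.2 y.1 - pci.gfun (d k) p p' x.1 x.2 y.2| ^ p' : ℝ)
                : ℂ)) := by
      ext i j
      by_cases hij : i = j
      · subst hij; simp [Matrix.diagonal_apply]
      · simp [Matrix.diagonal_apply, hij]
    rw [hdiff]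
    apply le_trans (pci.conj_norm_le hWmem _)
    apply pci.diag_norm_le
    · have : (0:ℝ) ≤ (2:ℝ)⁻¹ ^ p' := Real.rpow_nonneg (by norm_num) p'
      exact mul_nonneg (hTk0 k) this
    · intro y
      have hval : ((|d k y.1 - d k y.2| ^ p : ℝ) : ℂ)
          - ∑ x : Fin n × Fin n,
            ((|pci.gfun (d k) p p' x.1 x.2 y.1 - pci.gfun (d k) p p' x.1 x.2 y.2| ^ p' : ℝ)
              : ℂ)
          = (((|d k y.1 - d k y.2| ^ p
            - ∑ x : Fin n × Fin n,
              |pci.gfun (d k) p p' x.1 x.2 y.1 - pci.gfun (d k) p p' x.1 x.2 y.2| ^ p' : ℝ))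
            : ℂ) := by
        push_cast
        ring
      rw [hval, Complex.norm_real, Real.norm_eq_abs]
      exact pci.numeric_core (d k) p p' hp hp'1 y.1 y.2
  -- put everything together
  have htail : (2:ℝ)⁻¹ ^ p' ≤ ε / (Ttot + 1) := by
    have hM : (0:ℝ) < (Ttot + 1) / ε := by positivity
    have h1 : (2:ℝ)⁻¹ ^ p' ≤ (2:ℝ)⁻¹ ^ (Real.logb 2 ((Ttot + 1) / ε)) :=
      Real.rpow_le_rpow_of_exponent_ge (by norm_num) (by norm_num)
        (le_trans (le_max_right _ _) hp')
    have h2 : (2:ℝ)⁻¹ ^ (Real.logb 2 ((Ttot + 1) / ε)) = ε / (Ttot + 1) := by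
      rw [Real.inv_rpow (by norm_num : (0:ℝ) ≤ 2),
        Real.rpow_logb two_pos (by norm_num) hM, inv_div]
    rw [h2] at h1
    exact h1
  calc ‖(∑ k, costOp p (A k)) - ∑ k, ∑ x : Fin n × Fin n, costOp p' (B' (k, x))‖
      = ‖∑ k, (costOp p (A k) - ∑ x : Fin n × Fin n, costOp p' (B' (k, x)))‖ := by
        rw [Finset.sum_sub_distrib]
    _ ≤ ∑ k, ‖costOp p (A k) - ∑ x : Fin n × Fin n, costOp p' (B' (k, x))‖ :=
        norm_sum_le _ _
    _ ≤ ∑ k, Tk k * (2:ℝ)⁻¹ ^ p' := Finset.sum_le_sum fun k _ => hperk k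
    _ = Ttot * (2:ℝ)⁻¹ ^ p' := (Finset.sum_mul _ _ _).symm
    _ ≤ Ttot * (ε / (Ttot + 1)) := by
        apply mul_le_mul_of_nonneg_left htail hTtot0
    _ ≤ ε := by
        rw [div_eq_mul_inv]
        have h1 : (0:ℝ) < Ttot + 1 := by linarith
        rw [mul_comm ε, ← mul_assoc]
        calc Ttot * (Ttot + 1)⁻¹ * ε ≤ 1 * ε := by
              apply mul_le_mul_of_nonneg_right _ hε.le
              rw [mul_inv_le_iff₀ h1]
              linarith
          _ = ε := one_mul ε
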